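/- For N = 2, the classical and no-signalling optimal winning probabilities of the GYNI game coincide for every prior distribution q on {0,1}²: ω_ns = ω_c = max_x (q(x) + q(x̄)). -/

import Mathlib

open scoped BigOperators

/-- Bitwise negation of a bit string. -/
def negStr {N : ℕ} (x : Fin N → Bool) : Fin N → Bool := fun i => !(x i)

/-- A no-signalling box for `N` parties with binary inputs and outputs. -/
structure NSBox (N : ℕ) where
  P : (Fin N → Bool) → (Fin N → Bool) → ℝ
  nonneg : ∀ a x, 0 ≤ P a x
  normalized : ∀ x, ∑ a, P a x = 1
  noSignalling : ∀ (S : Finset (Fin N)) (x x' : Fin N → Bool),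
    (∀ i ∈ S, x i = x' i) → ∀ a : Fin N → Bool,
      ∑ a' ∈ Finset.univ.filter (fun a' => ∀ i ∈ S, a' i = a i), P a' x =
      ∑ a' ∈ Finset.univ.filter (fun a' => ∀ i ∈ S, a' i = a i), P a' x'

/-- GYNI winning probability of a no-signalling box for prior `q`. -/
noncomputable def gyniWin {N : ℕ} [NeZero N] (q : (Fin N → Bool) → ℝ) (B : NSBox N) : ℝ :=
  ∑ x, q x * B.P (fun i => x (i + 1)) x

/-- The classical GYNI bound `ω_c = max_x (q(x) + q(x̄))`. -/
noncomputable def omegaC {N : ℕ} (q : (Fin N → Bool) → ℝ) : ℝ :=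
  Finset.univ.sup' Finset.univ_nonempty (fun x => q x + q (negStr x))

/-- A deterministic local strategy wins the GYNI game on input string `x`. -/
def winsOn {N : ℕ} [NeZero N] (f : Fin N → Bool → Bool) (x : Fin N → Bool) : Bool :=
  decide (∀ i, f i (x i) = x (i + 1))

/-- Winning probability of a deterministic local strategy. -/
noncomputable def classWin {N : ℕ} [NeZero N] (q : (Fin N → Bool) → ℝ)
    (f : Fin N → Bool → Bool) : ℝ :=
  ∑ x, q x * (if winsOn f x then (1:ℝ) else 0)

/-! ### Auxiliary lemmas -/

lemma sum4 (g : (Fin 2 → Bool) → ℝ) :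
    ∑ x, g x = g ![false,false] + g ![false,true] + g ![true,false] + g ![true,true] := by
  rw [← (piFinTwoEquiv fun _ => Bool).symm.sum_comp g]
  have h : ∀ a b : Bool, (Fin.cons a (Fin.cons b finZeroElim) : Fin 2 → Bool) = ![a,b] := by
    intro a b; funext i; fin_cases i <;> rfl
  simp only [Fintype.sum_prod_type, piFinTwoEquiv, Equiv.coe_fn_symm_mk, Fintype.sum_bool, h]
  ring

lemma swapstr (u v : Bool) : (fun i => (![u,v] : Fin 2 → Bool) (i+1)) = ![v,u] := by
  funext i; fin_cases i <;> simp

lemma winners_unique : ∀ (f : Fin 2 → Bool → Bool) (x y : Fin 2 → Bool),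
    winsOn f x = true → winsOn f y = true → y = x ∨ y = negStr x := by decide

lemma opt_winners : ∀ (w x : Fin 2 → Bool),
    winsOn (fun _ b => xor b (xor (w 0) (w 1))) x = true ↔ (x = w ∨ x = negStr w) := by decide

lemma ne_negStr : ∀ w : Fin 2 → Bool, w ≠ negStr w := by decide

lemma negStr_ff : negStr ![false,false] = ![true,true] := by
  funext i; fin_cases i <;> rfl

lemma negStr_ft : negStr ![false,true] = ![true,false] := by
  funext i; fin_cases i <;> rfl

lemma filt0 : ∀ a : Fin 2 → Bool,
    Finset.univ.filter (fun a' : Fin 2 → Bool => ∀ i ∈ ({0} : Finset (Fin 2)), a' i = a i)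
      = {![a 0, false], ![a 0, true]} := by decide

lemma filt1 : ∀ a : Fin 2 → Bool,
    Finset.univ.filter (fun a' : Fin 2 → Bool => ∀ i ∈ ({1} : Finset (Fin 2)), a' i = a i)
      = {![false, a 1], ![true, a 1]} := by decide

lemma pair_ne_0 : ∀ c : Bool, (![c, false] : Fin 2 → Bool) ≠ ![c, true] := by decide
lemma pair_ne_1 : ∀ c : Bool, (![false, c] : Fin 2 → Bool) ≠ ![true, c] := by decide

lemma key_ineq (q1 q2 q3 q4 p1 p2 p3 p4 : ℝ)
    (hq1 : 0 ≤ q1) (hq2 : 0 ≤ q2) (hq3 : 0 ≤ q3) (hq4 : 0 ≤ q4)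
    (hp3 : 0 ≤ p3) (hp4 : 0 ≤ p4)
    (e13 : p1 + p3 ≤ 1) (e14 : p1 + p4 ≤ 1) (e23 : p2 + p3 ≤ 1) (e24 : p2 + p4 ≤ 1)
    (hq : q3 + q4 ≤ q1 + q2) :
    q1*p1 + q2*p2 + q3*p3 + q4*p4 ≤ q1 + q2 := by
  rcases le_total (1-p1) (1-p2) with h | h
  · nlinarith [mul_le_mul_of_nonneg_left (show p3 ≤ 1-p1 by linarith) hq3,
      mul_le_mul_of_nonneg_left (show p4 ≤ 1-p1 by linarith) hq4,
      mul_le_mul_of_nonneg_right hq (show (0:ℝ) ≤ 1-p1 by linarith),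
      mul_le_mul_of_nonneg_left h hq2]
  · nlinarith [mul_le_mul_of_nonneg_left (show p3 ≤ 1-p2 by linarith) hq3,
      mul_le_mul_of_nonneg_left (show p4 ≤ 1-p2 by linarith) hq4,
      mul_le_mul_of_nonneg_right hq (show (0:ℝ) ≤ 1-p2 by linarith),
      mul_le_mul_of_nonneg_left h hq1]

/-- The deterministic no-signalling box implementing local strategy `f`. -/
noncomputable def detBox {N : ℕ} (f : Fin N → Bool → Bool) : NSBox N where
  P a x := if a = (fun i => f i (x i)) then 1 else 0
  nonneg a x := by split <;> norm_num
  normalized x := by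
    rw [Finset.sum_ite_eq' Finset.univ (fun i => f i (x i)) (fun _ => (1:ℝ))]
    simp
  noSignalling S x x' h a := by
    rw [Finset.sum_ite_eq' _ (fun i => f i (x i)) (fun _ => (1:ℝ)),
        Finset.sum_ite_eq' _ (fun i => f i (x' i)) (fun _ => (1:ℝ))]
    simp only [Finset.mem_filter, Finset.mem_univ, true_and]
    refine if_congr ?_ rfl rfl
    constructor <;> intro hh i hi
    · rw [← h i hi]; exact hh i hi
    · rw [h i hi]; exact hh i hi

lemma gyniWin_detBox (q : (Fin 2 → Bool) → ℝ) (f : Fin 2 → Bool → Bool) :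
    gyniWin q (detBox f) = classWin q f := by
  unfold gyniWin classWin detBox
  refine Finset.sum_congr rfl fun x _ => ?_
  congr 1
  refine if_congr ?_ rfl rfl
  rw [winsOn, decide_eq_true_iff, funext_iff]
  exact ⟨fun h i => (h i).symm, fun h i => (h i).symm⟩

lemma classWin_le (q : (Fin 2 → Bool) → ℝ) (hq : ∀ x, 0 ≤ q x) (f : Fin 2 → Bool → Bool) :
    classWin q f ≤ omegaC q := by
  by_cases hw : ∃ x, winsOn f x = true
  · obtain ⟨w, hwin⟩ := hw
    have step1 : classWin q f
        ≤ ∑ x, (if x ∈ ({w, negStr w} : Finset (Fin 2 → Bool)) then q x else 0) := by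
      refine Finset.sum_le_sum fun x _ => ?_
      by_cases hx : winsOn f x = true
      · have hmem : x ∈ ({w, negStr w} : Finset (Fin 2 → Bool)) := by
          rcases winners_unique f w x hwin hx with h | h <;> simp [h]
        rw [if_pos hmem]
        simp [hx]
      · simp only [Bool.not_eq_true] at hx
        simp only [hx, Bool.false_eq_true, if_false, mul_zero]
        split
        · exact hq x
        · exact le_rfl
    have step2 : (∑ x, (if x ∈ ({w, negStr w} : Finset (Fin 2 → Bool)) then q x else 0))
        = q w + q (negStr w) := by
      rw [Finset.sum_ite_mem, Finset.univ_inter, Finset.sum_pair (ne_negStr w)]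
    exact (step1.trans_eq step2).trans
      (Finset.le_sup' (fun x => q x + q (negStr x)) (Finset.mem_univ w))
  · push_neg at hw
    have h0 : classWin q f = 0 := by
      refine Finset.sum_eq_zero fun x _ => ?_
      simp only [Bool.not_eq_true] at hw
      simp [hw x]
    rw [h0]
    have h1 : (0:ℝ) ≤ q ![false,false] + q (negStr ![false,false]) :=
      add_nonneg (hq _) (hq _)
    exact h1.trans (Finset.le_sup' (fun x => q x + q (negStr x)) (Finset.mem_univ _))

lemma norm4 (B : NSBox 2) (x : Fin 2 → Bool) :
    B.P ![false,false] x + B.P ![false,true] x + B.P ![true,false] x + B.P ![true,true] x = 1 := by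
  rw [← sum4 (fun a => B.P a x)]; exact B.normalized x

lemma ns0 (B : NSBox 2) (x x' : Fin 2 → Bool) (h : x 0 = x' 0) (c : Bool) :
    B.P ![c,false] x + B.P ![c,true] x = B.P ![c,false] x' + B.P ![c,true] x' := by
  have := B.noSignalling {0} x x' (by intro i hi; rw [Finset.mem_singleton] at hi; rw [hi]; exact h)
    ![c, false]
  rw [filt0 ![c,false]] at this
  simp only [Matrix.cons_val_zero] at this
  rwa [Finset.sum_pair (pair_ne_0 c), Finset.sum_pair (pair_ne_0 c)] at this

lemma ns1 (B : NSBox 2) (x x' : Fin 2 → Bool) (h : x 1 = x' 1) (c : Bool) :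
    B.P ![false,c] x + B.P ![true,c] x = B.P ![false,c] x' + B.P ![true,c] x' := by
  have := B.noSignalling {1} x x' (by intro i hi; rw [Finset.mem_singleton] at hi; rw [hi]; exact h)
    ![false, c]
  rw [filt1 ![false,c]] at this
  simp only [Matrix.cons_val_one, Matrix.head_cons, Matrix.cons_val_zero] at this
  rwa [Finset.sum_pair (pair_ne_1 c), Finset.sum_pair (pair_ne_1 c)] at this

lemma gyniWin_le (q : (Fin 2 → Bool) → ℝ) (hq : ∀ x, 0 ≤ q x) (B : NSBox 2) :
    gyniWin q B ≤ omegaC q := by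
  have hrw : gyniWin q B =
      q ![false,false] * B.P ![false,false] ![false,false]
      + q ![false,true] * B.P ![true,false] ![false,true]
      + q ![true,false] * B.P ![false,true] ![true,false]
      + q ![true,true] * B.P ![true,true] ![true,true] := by
    rw [gyniWin, sum4 (fun x => q x * B.P (fun i => x (i+1)) x)]
    simp only [swapstr]
  set p1 := B.P ![false,false] ![false,false] with hp1'
  set p2 := B.P ![true,true] ![true,true] with hp2'
  set p3 := B.P ![true,false] ![false,true] with hp3'
  set p4 := B.P ![false,true] ![true,false] with hp4'
  -- edge constraints
  have e13 : p1 + p3 ≤ 1 := by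
    have hns := ns0 B ![false,false] ![false,true] rfl false
    have hn := norm4 B ![false,true]
    have h1 := B.nonneg ![false,true] ![false,false]
    have h2 := B.nonneg ![false,true] ![false,true]
    have h3 := B.nonneg ![false,false] ![false,true]
    have h4 := B.nonneg ![true,true] ![false,true]
    linarith
  have e24 : p2 + p4 ≤ 1 := by
    have hns := ns0 B ![true,true] ![true,false] rfl true
    have hn := norm4 B ![true,false]
    have h1 := B.nonneg ![true,false] ![true,true]
    have h2 := B.nonneg ![true,true] ![true,false]
    have h3 := B.nonneg ![false,false] ![true,false]
    have h4 := B.nonneg ![true,false] ![true,false]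
    linarith
  have e14 : p1 + p4 ≤ 1 := by
    have hns := ns1 B ![false,false] ![true,false] rfl false
    have hn := norm4 B ![true,false]
    have h1 := B.nonneg ![true,false] ![false,false]
    have h2 := B.nonneg ![false,false] ![true,false]
    have h3 := B.nonneg ![true,false] ![true,false]
    have h4 := B.nonneg ![true,true] ![true,false]
    linarith
  have e23 : p2 + p3 ≤ 1 := by
    have hns := ns1 B ![true,true] ![false,true] rfl true
    have hn := norm4 B ![false,true]
    have h1 := B.nonneg ![false,true] ![true,true]
    have h2 := B.nonneg ![false,true] ![false,true]
    have h3 := B.nonneg ![false,false] ![false,true]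
    have h4 := B.nonneg ![true,true] ![false,true]
    linarith
  have hp3 : 0 ≤ p3 := B.nonneg _ _
  have hp4 : 0 ≤ p4 := B.nonneg _ _
  have hp1 : 0 ≤ p1 := B.nonneg _ _
  have hp2 : 0 ≤ p2 := B.nonneg _ _
  rcases le_total (q ![false,true] + q ![true,false]) (q ![false,false] + q ![true,true])
    with h | h
  · have hk := key_ineq (q ![false,false]) (q ![true,true]) (q ![false,true]) (q ![true,false])
      p1 p2 p3 p4 (hq _) (hq _) (hq _) (hq _) hp3 hp4 e13 e14 e23 e24 h
    have hsup : q ![false,false] + q (negStr ![false,false]) ≤ omegaC q :=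
      Finset.le_sup' (fun x => q x + q (negStr x)) (Finset.mem_univ _)
    rw [negStr_ff] at hsup
    rw [hrw]; linarith
  · have hk := key_ineq (q ![false,true]) (q ![true,false]) (q ![false,false]) (q ![true,true])
      p3 p4 p1 p2 (hq _) (hq _) (hq _) (hq _) hp1 hp2 (by linarith) (by linarith)
      (by linarith) (by linarith) h
    have hsup : q ![false,true] + q (negStr ![false,true]) ≤ omegaC q :=
      Finset.le_sup' (fun x => q x + q (negStr x)) (Finset.mem_univ _)
    rw [negStr_ft] at hsup
    rw [hrw]; linarith

/-- For `N = 2` parties, the classical and no-signalling optimal GYNI winning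
probabilities coincide for every prior distribution `q`: both equal
`ω_c = max_x (q x + q x̄)`. -/
theorem gyni_two_party_ns_eq_classical
    (q : (Fin 2 → Bool) → ℝ) (hq : ∀ x, 0 ≤ q x) (hsum : ∑ x, q x = 1) :
    IsGreatest {w : ℝ | ∃ B : NSBox 2, w = gyniWin q B} (omegaC q) ∧
      IsGreatest {w : ℝ | ∃ f : Fin 2 → Bool → Bool, w = classWin q f} (omegaC q) := by
  obtain ⟨w, -, hwopt⟩ := Finset.exists_mem_eq_sup' (Finset.univ_nonempty)
    (fun x : Fin 2 → Bool => q x + q (negStr x))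
  set f0 : Fin 2 → Bool → Bool := fun _ b => xor b (xor (w 0) (w 1)) with hf0
  have hcw : classWin q f0 = q w + q (negStr w) := by
    have hterm : ∀ x, q x * (if winsOn f0 x then (1:ℝ) else 0)
        = if x ∈ ({w, negStr w} : Finset (Fin 2 → Bool)) then q x else 0 := by
      intro x
      by_cases h : x = w ∨ x = negStr w
      · rw [if_pos ((opt_winners w x).mpr h), mul_one,
          if_pos (by rcases h with h | h <;> simp [h])]
      · have hfalse : winsOn f0 x = false := by
          rw [Bool.eq_false_iff]
          intro hc
          exact h ((opt_winners w x).mp hc)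
        rw [hfalse]
        simp [Finset.mem_insert, Finset.mem_singleton, h]
    rw [classWin]
    rw [Finset.sum_congr rfl fun x _ => hterm x]
    rw [Finset.sum_ite_mem, Finset.univ_inter, Finset.sum_pair (ne_negStr w)]
  have homega : omegaC q = classWin q f0 := by rw [hcw, omegaC, hwopt]
  refine ⟨⟨⟨detBox f0, ?_⟩, ?_⟩, ⟨⟨f0, homega⟩, ?_⟩⟩
  · rw [gyniWin_detBox, ← homega]
  · rintro v ⟨B, rfl⟩
    exact gyniWin_le q hq B
  · rintro v ⟨f, rfl⟩
    exact classWin_le q hq f
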